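/- Suppose A_1, A_2 are reals with 1 ≤ A_1 < A_2, and {S_n} is a sequence of reals such that liminf S_n = A_1 and limsup S_n = A_2. Fix δ > 0 small. Then for every s₀ such that max{1, A_1−δ} < S_n < A_2+δ for all n ≥ s₀, there exist s₁ > s₀ with max{1, A_1−δ} < S_{s₁} < A_1+δ, there exists s₂ > s₁ with A_2−δ < S_{s₂} < A_2+δ, and there exists N with s₁ ≤ N < s₂ such that S_{N+1} > (1 + 1/(N+1)²) · max{ max_{s₁≤j≤N} S_j, A_2−2δ }, provided s₁ is sufficiently large. -/

import Mathlib

open Filter Finset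

lemma sum_inv_sq_bound (s : ℕ) (hs : 1 ≤ s) :
    ∀ m, s ≤ m → ∑ j ∈ Icc (s+1) m, (1/(j:ℝ)^2) ≤ 1/(s:ℝ) - 1/(m:ℝ) := by
  intro m hm
  induction m, hm using Nat.le_induction with
  | base => rw [Finset.Icc_eq_empty (by omega)]; simp
  | succ m hm ih =>
    rw [Finset.sum_Icc_succ_top (by omega)]
    have hm1 : (1:ℝ) ≤ (m:ℝ) := by exact_mod_cast hs.trans hm
    have key : 1/((m:ℝ)+1)^2 ≤ 1/(m:ℝ) - 1/((m:ℝ)+1) := by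
      have h1 : 1/(m:ℝ) - 1/((m:ℝ)+1) = 1/((m:ℝ)*((m:ℝ)+1)) := by
        field_simp
        ring
      rw [h1]
      apply one_div_le_one_div_of_le (by positivity)
      nlinarith
    push_cast
    linarith

lemma prod_one_add_inv_sq_bound (s : ℕ) (hs : 1 ≤ s) (m : ℕ) (hm : s ≤ m) :
    ∏ j ∈ Icc (s+1) m, (1 + 1/(j:ℝ)^2) ≤ Real.exp (1/(s:ℝ)) := by
  have h1 : ∏ j ∈ Icc (s+1) m, (1 + 1/(j:ℝ)^2)
      ≤ ∏ j ∈ Icc (s+1) m, Real.exp (1/(j:ℝ)^2) := by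
    apply Finset.prod_le_prod
    · intro j hj; positivity
    · intro j hj
      have := Real.add_one_le_exp (1/(j:ℝ)^2)
      linarith
  rw [← Real.exp_sum] at h1
  refine h1.trans (Real.exp_le_exp.mpr ?_)
  have h2 := sum_inv_sq_bound s hs m hm
  have hm0 : (0:ℝ) < (m:ℝ) := by
    have : 0 < m := by omega
    exact_mod_cast this
  have : (0:ℝ) < 1/(m:ℝ) := by positivity
  linarith

theorem stmt_18 (A₁ A₂ δ : ℝ) (hA₁ : 1 ≤ A₁) (hA : A₁ < A₂)
    (hδ0 : 0 < δ) (hδ : δ < (A₂ - A₁) / 2)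
    (S : ℕ → ℝ)
    (hinf : liminf S atTop = A₁) (hsup : limsup S atTop = A₂) :
    ∃ M : ℕ, ∀ s₀ : ℕ, M ≤ s₀ →
      (∀ n : ℕ, s₀ ≤ n → max 1 (A₁ - δ) < S n ∧ S n < A₂ + δ) →
      ∃ s₁ : ℕ, s₀ < s₁ ∧ (max 1 (A₁ - δ) < S s₁ ∧ S s₁ < A₁ + δ) ∧
        ∃ s₂ : ℕ, s₁ < s₂ ∧ (A₂ - δ < S s₂ ∧ S s₂ < A₂ + δ) ∧
          ∃ N : ℕ, ∃ h : s₁ ≤ N ∧ N < s₂,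
            S (N + 1) >
              (1 + 1 / ((N : ℝ) + 1) ^ 2) *
                max ((Icc s₁ N).sup' (Finset.nonempty_Icc.mpr h.1) S) (A₂ - 2 * δ) := by
  classical
  set C : ℝ := max (A₁ + δ) (A₂ - 2*δ) with hCdef
  have hC0 : (0:ℝ) < C := lt_of_lt_of_le (by linarith) (le_max_left _ _)
  have hClt : C < A₂ - δ := max_lt (by linarith) (by linarith)
  have hL : 0 < Real.log ((A₂ - δ)/C) := by
    apply Real.log_pos
    rw [lt_div_iff₀ hC0]; linarith
  obtain ⟨M, hM⟩ := exists_nat_gt (Real.log ((A₂ - δ)/C))⁻¹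
  have hM0 : 0 < M := by
    have : (0:ℝ) < (M:ℝ) := lt_trans (by positivity) hM
    exact_mod_cast this
  have hML : 1/(M:ℝ) < Real.log ((A₂ - δ)/C) := by
    have := one_div_lt_one_div_of_lt (by positivity) hM
    simpa [one_div, inv_inv] using this
  refine ⟨M, fun s₀ hs₀ hbd => ?_⟩
  have hbdd_above : IsBoundedUnder (· ≤ ·) atTop S :=
    ⟨A₂ + δ, eventually_atTop.2 ⟨s₀, fun n hn => (hbd n hn).2.le⟩⟩
  have hbdd_below : IsBoundedUnder (· ≥ ·) atTop S :=
    ⟨1, eventually_atTop.2 ⟨s₀, fun n hn =>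
      le_of_lt (lt_of_le_of_lt (le_max_left 1 (A₁ - δ)) (hbd n hn).1)⟩⟩
  have h1 : ∃ᶠ n in atTop, S n < A₁ + δ := by
    apply frequently_lt_of_liminf_lt hbdd_above.isCoboundedUnder_ge
    rw [hinf]; linarith
  obtain ⟨s₁, hs₁gt, hSs₁⟩ := frequently_atTop.mp h1 (s₀+1)
  have h2 : ∃ᶠ n in atTop, A₂ - δ < S n := by
    apply frequently_lt_of_lt_limsup hbdd_below.isCoboundedUnder_le
    rw [hsup]; linarith
  obtain ⟨s₂, hs₂gt, hSs₂⟩ := frequently_atTop.mp h2 (s₁+1)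
  refine ⟨s₁, by omega, ⟨(hbd s₁ (by omega)).1, hSs₁⟩, s₂, by omega,
    ⟨hSs₂, (hbd s₂ (by omega)).2⟩, ?_⟩
  by_contra hcon
  push_neg at hcon
  have hs₁M : M < s₁ := by omega
  have hs₁1 : 1 ≤ s₁ := by omega
  -- running maximum bound, by induction
  have key : ∀ n, ∀ hn : s₁ ≤ n, n < s₂ →
      max ((Icc s₁ n).sup' (Finset.nonempty_Icc.mpr hn) S) (A₂ - 2*δ)
        ≤ C * ∏ j ∈ Icc (s₁+1) n, (1 + 1/(j:ℝ)^2) := by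
    intro n hn
    induction n, hn using Nat.le_induction with
    | base =>
      intro _
      have he : Icc (s₁+1) s₁ = ∅ := Finset.Icc_eq_empty_of_lt (Nat.lt_succ_self s₁)
      rw [he, Finset.prod_empty, mul_one]
      apply max_le
      · apply Finset.sup'_le
        intro j hj
        rw [Finset.mem_Icc] at hj
        have : j = s₁ := by omega
        subst this
        exact le_trans hSs₁.le (le_max_left _ _)
      · exact le_max_right _ _
    | succ n hn ih =>
      intro hlt
      have ihn := ih (by omega)
      set P : ℝ := ∏ j ∈ Icc (s₁+1) n, (1 + 1/(j:ℝ)^2) with hPdef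
      set F : ℝ := 1 + 1/((n:ℝ)+1)^2 with hFdef
      set B : ℝ := max ((Icc s₁ n).sup' (Finset.nonempty_Icc.mpr hn) S) (A₂ - 2*δ) with hBdef
      have hF1 : (1:ℝ) ≤ F := by
        rw [hFdef]; have : (0:ℝ) < 1/((n:ℝ)+1)^2 := by positivity
        linarith
      have hBpos : (0:ℝ) < B :=
        lt_of_lt_of_le (by linarith) (le_max_right _ _)
      have hS : S (n+1) ≤ F * B := hcon n ⟨hn, by omega⟩
      have hBFB : B ≤ F * B := le_mul_of_one_le_left hBpos.le hF1
      have hFB : F * B ≤ C * (P * F) := by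
        calc F * B ≤ F * (C * P) :=
              mul_le_mul_of_nonneg_left ihn (by linarith)
          _ = C * (P * F) := by ring
      rw [Finset.prod_Icc_succ_top (by omega)]
      have hcast : (1 + 1/((↑(n+1):ℝ))^2) = F := by rw [hFdef]; push_cast; ring
      rw [hcast, ← hPdef]
      apply max_le
      · apply Finset.sup'_le
        intro j hj
        rw [Finset.mem_Icc] at hj
        rcases Nat.lt_or_ge j (n+1) with hjn | hjn
        · have hjB : S j ≤ B := le_trans
            (Finset.le_sup' S (Finset.mem_Icc.mpr ⟨hj.1, by omega⟩)) (le_max_left _ _)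
          linarith
        · have : j = n + 1 := by omega
          subst this
          linarith
      · calc A₂ - 2*δ ≤ B := le_max_right _ _
          _ ≤ F * B := hBFB
          _ ≤ C * (P * F) := hFB
  -- derive the contradiction at n = s₂ - 1
  obtain ⟨m, rfl⟩ : ∃ m, s₂ = m + 1 := ⟨s₂ - 1, by omega⟩
  have hms₁ : s₁ ≤ m := by omega
  have hkeym := key m hms₁ (by omega)
  have hSm : S (m+1) ≤ (1 + 1/((m:ℝ)+1)^2) *
      max ((Icc s₁ m).sup' (Finset.nonempty_Icc.mpr hms₁) S) (A₂ - 2*δ) :=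
    hcon m ⟨hms₁, by omega⟩
  set P : ℝ := ∏ j ∈ Icc (s₁+1) m, (1 + 1/(j:ℝ)^2) with hPdef
  set F : ℝ := 1 + 1/((m:ℝ)+1)^2 with hFdef
  have hF0 : (0:ℝ) ≤ F := by positivity
  have hchain : S (m+1) ≤ C * (P * F) := by
    calc S (m+1) ≤ F * max ((Icc s₁ m).sup' (Finset.nonempty_Icc.mpr hms₁) S) (A₂ - 2*δ) :=
          hSm
      _ ≤ F * (C * P) := mul_le_mul_of_nonneg_left hkeym hF0
      _ = C * (P * F) := by ring
  have hPF : P * F = ∏ j ∈ Icc (s₁+1) (m+1), (1 + 1/(j:ℝ)^2) := by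
    rw [Finset.prod_Icc_succ_top (by omega)]
    push_cast
    ring
  have hprod : P * F ≤ Real.exp (1/(s₁:ℝ)) := by
    rw [hPF]
    exact prod_one_add_inv_sq_bound s₁ hs₁1 (m+1) (by omega)
  have hs₁pos : (0:ℝ) < (s₁:ℝ) := by exact_mod_cast hs₁1
  have hexp : Real.exp (1/(s₁:ℝ)) < (A₂ - δ)/C := by
    have h1 : 1/(s₁:ℝ) < 1/(M:ℝ) := by
      apply one_div_lt_one_div_of_lt
      · exact_mod_cast hM0
      · exact_mod_cast hs₁M
    have := Real.exp_lt_exp.mpr (lt_trans h1 hML)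
    rwa [Real.exp_log (div_pos (by linarith) hC0)] at this
  have hfinal : C * (P * F) < A₂ - δ := by
    have := mul_lt_mul_of_pos_left (lt_of_le_of_lt hprod hexp) hC0
    rwa [mul_div_cancel₀ _ (ne_of_gt hC0)] at this
  linarith
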